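/- Consider a semiexplicit descriptor system: E = [[Σ, 0],[0, 0]] and A = [[A11, A12],[A21, A22]] in block form with Σ ∈ ℂ^{r×r} Hermitian positive definite and A22 ∈ ℂ^{(n−r)×(n−r)} invertible, C = [C1, C2] ∈ ℂ^{m×n}, and let 𝒜 = Σ^{-1/2}(A11 − A12 A22^{-1} A21)Σ^{-1/2} and 𝒞 = (C1 − C2 A22^{-1} A21)Σ^{-1/2} be the reduced coefficients. Then the descriptor system is behaviorally observable if and only if the reduced standard state-space pair is observable; that is, rank [λE − A; C] = n for all λ ∈ ℂ if and only if rank [λ I_r − 𝒜; 𝒞] = r for all λ ∈ ℂ, where [M; N] denotes the matrix obtained by stacking N below M. -/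

import Mathlib

open Matrix
open scoped ComplexOrder

open LinearMap

lemma myRankSubmatrix {l m n o : Type*} [Fintype m] [Fintype n] [Fintype l] [Fintype o]
    [DecidableEq n] [DecidableEq o]
    (A : Matrix m n ℂ) (e₁ : l ≃ m) (e₂ : o ≃ n) :
    (A.submatrix e₁ e₂).rank = A.rank := by
  have h : A.submatrix (e₁ : l → m) (e₂ : o → n) = reindex e₁.symm e₂.symm A := by
    simp [reindex_apply]
  rw [h, Matrix.rank, Matrix.rank, mulVecLin_reindex, LinearMap.range_comp,
    LinearMap.range_comp, LinearEquiv.range, Submodule.map_top, LinearEquiv.finrank_map_eq]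

lemma mySubmoduleProdFinrank {M N : Type*} [AddCommGroup M] [AddCommGroup N]
    [Module ℂ M] [Module ℂ N] [FiniteDimensional ℂ M] [FiniteDimensional ℂ N]
    (p : Submodule ℂ M) (q : Submodule ℂ N) :
    Module.finrank ℂ (p.prod q) = Module.finrank ℂ p + Module.finrank ℂ q := by
  rw [← Module.finrank_prod]
  refine LinearEquiv.finrank_eq ?_
  exact
  { toFun := fun x => (⟨x.1.1, x.2.1⟩, ⟨x.1.2, x.2.2⟩)
    invFun := fun y => ⟨(y.1.1, y.2.1), ⟨y.1.2, y.2.2⟩⟩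
    map_add' := fun a b => rfl
    map_smul' := fun c a => rfl
    left_inv := fun a => rfl
    right_inv := fun a => rfl }

lemma myRankFromBlocksDiag {l m n o : Type*} [Fintype l] [Fintype m] [Fintype n] [Fintype o]
    [DecidableEq n] [DecidableEq o]
    (A : Matrix l n ℂ) (D : Matrix m o ℂ) :
    (Matrix.fromBlocks A 0 0 D).rank = A.rank + D.rank := by
  classical
  set e₁ : ((n ⊕ o) → ℂ) ≃ₗ[ℂ] (n → ℂ) × (o → ℂ) := LinearEquiv.sumArrowLequivProdArrow n o ℂ ℂ
  set e₂ : ((l ⊕ m) → ℂ) ≃ₗ[ℂ] (l → ℂ) × (m → ℂ) := LinearEquiv.sumArrowLequivProdArrow l m ℂ ℂ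
  have key : (Matrix.fromBlocks A 0 0 D).mulVecLin
      = e₂.symm.toLinearMap ∘ₗ (A.mulVecLin.prodMap D.mulVecLin) ∘ₗ e₁.toLinearMap := by
    apply LinearMap.ext; intro x
    funext i
    have hx : x = Sum.elim (x ∘ Sum.inl) (x ∘ Sum.inr) := by
      funext j; cases j <;> rfl
    cases i with
    | inl i =>
        rw [mulVecLin_apply]
        rw [show (Matrix.fromBlocks A 0 0 D).mulVec x
          = (Matrix.fromBlocks A 0 0 D).mulVec (Sum.elim (x ∘ Sum.inl) (x ∘ Sum.inr)) by rw [← hx]]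
        rw [fromBlocks_mulVec]
        simp [e₁, e₂, LinearEquiv.sumArrowLequivProdArrow, Equiv.sumArrowEquivProdArrow]
    | inr i =>
        rw [mulVecLin_apply]
        rw [show (Matrix.fromBlocks A 0 0 D).mulVec x
          = (Matrix.fromBlocks A 0 0 D).mulVec (Sum.elim (x ∘ Sum.inl) (x ∘ Sum.inr)) by rw [← hx]]
        rw [fromBlocks_mulVec]
        simp [e₁, e₂, LinearEquiv.sumArrowLequivProdArrow, Equiv.sumArrowEquivProdArrow]
  have hr : range (A.mulVecLin.prodMap D.mulVecLin)
      = (range A.mulVecLin).prod (range D.mulVecLin) := by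
    ext ⟨u, v⟩
    simp only [LinearMap.mem_range, Submodule.mem_prod]
    constructor
    · rintro ⟨⟨x, y⟩, h⟩
      rw [LinearMap.prodMap_apply] at h
      exact ⟨⟨x, congrArg Prod.fst h⟩, ⟨y, congrArg Prod.snd h⟩⟩
    · rintro ⟨⟨x, hx⟩, ⟨y, hy⟩⟩
      exact ⟨(x, y), by simp [hx, hy]⟩
  rw [Matrix.rank, key, LinearMap.range_comp, LinearMap.range_comp, LinearEquiv.range,
    Submodule.map_top, LinearEquiv.finrank_map_eq, hr, mySubmoduleProdFinrank]
  rfl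

/-- Reshuffling equivalence for the rows. -/
def myShuffle (r s m : ℕ) : ((Fin r ⊕ Fin s) ⊕ Fin m) ≃ (Fin s ⊕ (Fin r ⊕ Fin m)) where
  toFun := Sum.elim (Sum.elim (fun a => Sum.inr (Sum.inl a)) Sum.inl) (fun c => Sum.inr (Sum.inr c))
  invFun := Sum.elim (fun b => Sum.inl (Sum.inr b)) (Sum.elim (fun a => Sum.inl (Sum.inl a)) Sum.inr)
  left_inv := by rintro ((a|b)|c) <;> rfl
  right_inv := by rintro (b|(a|c)) <;> rfl

/-- A semiexplicit descriptor system is behaviorally observable iff the reduced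
standard state-space pair `(𝒜, 𝒞)` is observable. -/
theorem semiexplicit_behavioral_observability
    (r s m : ℕ)
    (Sg : Matrix (Fin r) (Fin r) ℂ) (hSg : Sg.PosDef)
    (A11 : Matrix (Fin r) (Fin r) ℂ) (A12 : Matrix (Fin r) (Fin s) ℂ)
    (A21 : Matrix (Fin s) (Fin r) ℂ) (A22 : Matrix (Fin s) (Fin s) ℂ)
    (hA22 : IsUnit A22)
    (C1 : Matrix (Fin m) (Fin r) ℂ) (C2 : Matrix (Fin m) (Fin s) ℂ)
    (E : Matrix (Fin r ⊕ Fin s) (Fin r ⊕ Fin s) ℂ)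
    (hE : E = Matrix.fromBlocks Sg 0 0 0)
    (A : Matrix (Fin r ⊕ Fin s) (Fin r ⊕ Fin s) ℂ)
    (hA : A = Matrix.fromBlocks A11 A12 A21 A22)
    (C : Matrix (Fin m) (Fin r ⊕ Fin s) ℂ) (hC : C = Matrix.fromCols C1 C2)
    (S : Matrix (Fin r) (Fin r) ℂ) (hS : S = hSg.posSemidef.1.eigenvectorUnitary.1 *
      diagonal ((↑) ∘ Real.sqrt ∘ hSg.posSemidef.1.eigenvalues) *
      (star hSg.posSemidef.1.eigenvectorUnitary : Matrix (Fin r) (Fin r) ℂ))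
    (𝒜 : Matrix (Fin r) (Fin r) ℂ) (h𝒜 : 𝒜 = S⁻¹ * (A11 - A12 * A22⁻¹ * A21) * S⁻¹)
    (𝒞 : Matrix (Fin m) (Fin r) ℂ) (h𝒞 : 𝒞 = (C1 - C2 * A22⁻¹ * A21) * S⁻¹) :
    (∀ lam : ℂ, (Matrix.fromRows (lam • E - A) C).rank = r + s)
    ↔ (∀ lam : ℂ,
        (Matrix.fromRows (lam • (1 : Matrix (Fin r) (Fin r) ℂ) - 𝒜) 𝒞).rank = r) := by
  subst hE hA hC
  have hSgdet : IsUnit Sg.det := (Matrix.isUnit_iff_isUnit_det Sg).mp hSg.isUnit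
  have hS2 : S * S = Sg := by
    rw [hS]
    have hU : (star hSg.posSemidef.1.eigenvectorUnitary : Matrix (Fin r) (Fin r) ℂ) *
        hSg.posSemidef.1.eigenvectorUnitary.1 = 1 :=
      hSg.posSemidef.1.eigenvectorUnitary.2.1
    have hD : diagonal (((↑) ∘ Real.sqrt ∘ hSg.posSemidef.1.eigenvalues : Fin r → ℂ)) *
        diagonal ((↑) ∘ Real.sqrt ∘ hSg.posSemidef.1.eigenvalues) =
        diagonal (RCLike.ofReal ∘ hSg.posSemidef.1.eigenvalues) := by
      rw [diagonal_mul_diagonal]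
      congr 1
      funext i
      simp only [Function.comp_apply]
      rw [← Complex.ofReal_mul, Real.mul_self_sqrt (hSg.posSemidef.eigenvalues_nonneg i)]
      rfl
    conv_rhs => rw [hSg.posSemidef.1.spectral_theorem, Unitary.conjStarAlgAut_apply]
    calc _ = hSg.posSemidef.1.eigenvectorUnitary.1 *
          (diagonal ((↑) ∘ Real.sqrt ∘ hSg.posSemidef.1.eigenvalues) *
          ((star hSg.posSemidef.1.eigenvectorUnitary : Matrix (Fin r) (Fin r) ℂ) *
            hSg.posSemidef.1.eigenvectorUnitary.1) *
          diagonal ((↑) ∘ Real.sqrt ∘ hSg.posSemidef.1.eigenvalues)) *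
          (star hSg.posSemidef.1.eigenvectorUnitary : Matrix (Fin r) (Fin r) ℂ) := by
            simp only [Matrix.mul_assoc]
      _ = _ := by rw [hU, Matrix.mul_one, hD]
  have hSdet : IsUnit S.det := by
    have h : S.det * S.det = Sg.det := by rw [← Matrix.det_mul, hS2]
    exact isUnit_of_mul_isUnit_left (by rw [h]; exact hSgdet)
  have hA22det : IsUnit A22.det := (Matrix.isUnit_iff_isUnit_det A22).mp hA22
  have hK : A22 * A22⁻¹ = 1 := Matrix.mul_nonsing_inv _ hA22det
  have hK' : A22⁻¹ * A22 = 1 := Matrix.nonsing_inv_mul _ hA22det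
  have hSi : S * S⁻¹ = 1 := Matrix.mul_nonsing_inv _ hSdet
  have hSi' : S⁻¹ * S = 1 := Matrix.nonsing_inv_mul _ hSdet
  set Ab := A11 - A12 * A22⁻¹ * A21 with hAb
  set Cb := C1 - C2 * A22⁻¹ * A21 with hCb
  have main : ∀ lam : ℂ,
      (Matrix.fromRows (lam • Matrix.fromBlocks Sg 0 0 0 - Matrix.fromBlocks A11 A12 A21 A22)
        (Matrix.fromCols C1 C2)).rank
      = s + (Matrix.fromRows (lam • (1 : Matrix (Fin r) (Fin r) ℂ) - 𝒜) 𝒞).rank := by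
    intro lam
    have hMeq : lam • Matrix.fromBlocks Sg 0 0 0 - Matrix.fromBlocks A11 A12 A21 A22
        = Matrix.fromBlocks (lam • Sg - A11) (-A12) (-A21) (-A22) := by
      ext (i|i) (j|j) <;> simp
    set T : Matrix (Fin r ⊕ Fin s) (Fin r ⊕ Fin s) ℂ :=
      Matrix.fromBlocks 1 0 (-(A22⁻¹ * A21)) 1 with hT
    have hTdet : IsUnit T.det := by
      rw [hT, Matrix.det_fromBlocks_zero₁₂]
      simp
    set P : Matrix (Fin r ⊕ Fin s) (Fin r ⊕ Fin s) ℂ :=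
      Matrix.fromBlocks 1 (-(A12 * A22⁻¹)) 0 1 with hP
    set G : Matrix ((Fin r ⊕ Fin s) ⊕ Fin m) ((Fin r ⊕ Fin s) ⊕ Fin m) ℂ :=
      Matrix.fromBlocks P 0 (Matrix.fromCols 0 (C2 * A22⁻¹)) 1 with hG
    have hGdet : IsUnit G.det := by
      rw [hG, Matrix.det_fromBlocks_zero₁₂, hP, Matrix.det_fromBlocks_zero₂₁]
      simp
    have hMT : Matrix.fromBlocks (lam • Sg - A11) (-A12) (-A21) (-A22) * T
        = Matrix.fromBlocks (lam • Sg - Ab) (-A12) 0 (-A22) := by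
      rw [hT, Matrix.fromBlocks_multiply, Matrix.fromBlocks_inj]
      refine ⟨?_, ?_, ?_, ?_⟩
      · rw [Matrix.mul_one, Matrix.neg_mul, Matrix.mul_neg, neg_neg, ← Matrix.mul_assoc, hAb]
        abel
      · simp
      · rw [Matrix.mul_one, Matrix.neg_mul, Matrix.mul_neg, neg_neg, ← Matrix.mul_assoc, hK, Matrix.one_mul]
        abel
      · simp
    have hCT : Matrix.fromCols C1 C2 * T = Matrix.fromCols Cb C2 := by
      rw [hT, Matrix.fromCols_mul_fromBlocks]
      refine congrArg₂ _ ?_ ?_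
      · rw [Matrix.mul_one, Matrix.mul_neg, ← Matrix.mul_assoc, hCb]
        abel
      · simp
    have hGprod : G * Matrix.fromRows (Matrix.fromBlocks (lam • Sg - Ab) (-A12) 0 (-A22))
          (Matrix.fromCols Cb C2)
        = Matrix.fromRows (Matrix.fromBlocks (lam • Sg - Ab) 0 0 (-A22))
          (Matrix.fromCols Cb 0) := by
      rw [hG, Matrix.fromBlocks_mul_fromRows]
      refine congrArg₂ _ ?_ ?_
      · rw [Matrix.zero_mul, add_zero, hP, Matrix.fromBlocks_multiply, Matrix.fromBlocks_inj]
        refine ⟨?_, ?_, ?_, ?_⟩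
        · simp
        · rw [Matrix.one_mul, Matrix.neg_mul, Matrix.mul_neg, neg_neg, Matrix.mul_assoc, hK', Matrix.mul_one]
          abel
        · simp
        · simp
      · rw [Matrix.one_mul, Matrix.fromCols_mul_fromBlocks]
        ext i (j|j) <;>
          simp [Matrix.mul_neg, Matrix.mul_assoc, hK']
    have hsub : Matrix.fromRows (Matrix.fromBlocks (lam • Sg - Ab) 0 0 (-A22))
          (Matrix.fromCols Cb 0)
        = (Matrix.fromBlocks (-A22) 0 0 (Matrix.fromRows (lam • Sg - Ab) Cb)).submatrix
            (myShuffle r s m) (Equiv.sumComm (Fin r) (Fin s)) := by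
      ext ((a|b)|c) (j|j) <;> simp [myShuffle]
    have hNfac : Matrix.fromRows (lam • Sg - Ab) Cb
        = Matrix.fromBlocks S 0 0 (1 : Matrix (Fin m) (Fin m) ℂ)
          * Matrix.fromRows (lam • (1 : Matrix (Fin r) (Fin r) ℂ) - 𝒜) 𝒞 * S := by
      rw [Matrix.fromBlocks_mul_fromRows, Matrix.fromRows_mul]
      refine congrArg₂ _ ?_ ?_
      · rw [Matrix.zero_mul, add_zero, h𝒜]
        have h1 : S * (lam • (1 : Matrix (Fin r) (Fin r) ℂ) - S⁻¹ * Ab * S⁻¹) * S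
            = lam • (S * S) - (S * S⁻¹) * Ab * (S⁻¹ * S) := by
          rw [Matrix.mul_sub, Matrix.sub_mul]
          congr 1
          · simp [Matrix.mul_smul, Matrix.smul_mul]
          · simp only [Matrix.mul_assoc]
        rw [h1, hS2, hSi, hSi', Matrix.one_mul, Matrix.mul_one]
      · rw [Matrix.zero_mul, zero_add, Matrix.one_mul, h𝒞, Matrix.mul_assoc, hSi',
          Matrix.mul_one]
    have hLdet : IsUnit (Matrix.fromBlocks S 0 0 (1 : Matrix (Fin m) (Fin m) ℂ)).det := by
      rw [Matrix.det_fromBlocks_zero₁₂]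
      simpa using hSdet
    calc (Matrix.fromRows
            (lam • Matrix.fromBlocks Sg 0 0 0 - Matrix.fromBlocks A11 A12 A21 A22)
            (Matrix.fromCols C1 C2)).rank
        = (G * (Matrix.fromRows
            (lam • Matrix.fromBlocks Sg 0 0 0 - Matrix.fromBlocks A11 A12 A21 A22)
            (Matrix.fromCols C1 C2) * T)).rank := by
          rw [Matrix.rank_mul_eq_right_of_isUnit_det _ _ hGdet,
            Matrix.rank_mul_eq_left_of_isUnit_det _ _ hTdet]
      _ = ((Matrix.fromBlocks (-A22) 0 0 (Matrix.fromRows (lam • Sg - Ab) Cb)).submatrix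
            (myShuffle r s m) (Equiv.sumComm (Fin r) (Fin s))).rank := by
          rw [Matrix.fromRows_mul, hMeq, hMT, hCT, hGprod, hsub]
      _ = (Matrix.fromBlocks (-A22) 0 0 (Matrix.fromRows (lam • Sg - Ab) Cb)).rank :=
          myRankSubmatrix _ _ _
      _ = (-A22).rank + (Matrix.fromRows (lam • Sg - Ab) Cb).rank := myRankFromBlocksDiag _ _
      _ = s + (Matrix.fromRows (lam • (1 : Matrix (Fin r) (Fin r) ℂ) - 𝒜) 𝒞).rank := by
          rw [Matrix.rank_of_isUnit _ hA22.neg, Fintype.card_fin, hNfac,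
            Matrix.rank_mul_eq_left_of_isUnit_det _ _ hSdet,
            Matrix.rank_mul_eq_right_of_isUnit_det _ _ hLdet]
  constructor
  · intro h lam
    have h1 := main lam
    rw [h lam] at h1
    omega
  · intro h lam
    rw [main lam, h lam]
    omega
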